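/- Let f, p, q, p₁₀, q₁₀ : ℝ → ℂ be differentiable functions satisfying for all x: f′ = 2(p q − p₁₀ q₁₀), p′ = 2(p f − p₁₀), and q₁₀′ = 2(q − q₁₀ f). Then (f − p q₁₀)′ = 0, i.e. the quantity f − p q₁₀ is constant. -/

import Mathlib

/-- The Bäcklund system satisfied by the entries of the elementary Darboux
matrix of NLS admits the first integral `f − p q₁₀`: its derivative vanishes,
so it is constant. -/
theorem stmt_9 (f p q p₁₀ q₁₀ : ℝ → ℂ)
    (hf : Differentiable ℝ f) (hp : Differentiable ℝ p)
    (hq₁₀ : Differentiable ℝ q₁₀)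
    (h1 : ∀ x : ℝ, deriv f x = 2 * (p x * q x - p₁₀ x * q₁₀ x))
    (h2 : ∀ x : ℝ, deriv p x = 2 * (p x * f x - p₁₀ x))
    (h3 : ∀ x : ℝ, deriv q₁₀ x = 2 * (q x - q₁₀ x * f x)) :
    (∀ x : ℝ, deriv (fun t => f t - p t * q₁₀ t) x = 0) ∧
    (∀ x x' : ℝ, f x - p x * q₁₀ x = f x' - p x' * q₁₀ x') := by
  have key : ∀ x : ℝ, deriv (fun t => f t - p t * q₁₀ t) x = 0 := by
    intro x
    rw [deriv_fun_sub (hf x) (show DifferentiableAt ℝ (fun t => p t * q₁₀ t) x from (hp x).mul (hq₁₀ x)),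
        deriv_fun_mul (hp x) (hq₁₀ x), h1, h2, h3]
    ring
  refine ⟨key, fun x x' => ?_⟩
  have := is_const_of_deriv_eq_zero (f := fun t => f t - p t * q₁₀ t)
    (hf.sub (hp.mul hq₁₀)) key x x'
  simpa using this
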